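/- Minimum output entropy of Λ_x: for every real x with 0 ≤ x ≤ 1 and every vector ψ ∈ ℂ³ with ‖ψ‖ = 1, the matrix A = Λ_x(ψψ†) is Hermitian positive semidefinite, and the sum over its (real) eigenvalues λ of −λ·log λ (with 0·log 0 = 0) is at least −(x/2)·log(x/2) − (1 − x/2)·log(1 − x/2); i.e., the von Neumann entropy of any pure-state output of Λ_x is at least the binary entropy h(x/2). -/

import Mathlib

open Matrix
open scoped ComplexOrder

/-- The interpolated Landau–Streater/Werner–Holevo channel
`Λ_x(ρ) = (1−x)·ρ + (x/2)·(Tr(ρ)·I₃ − ρᵀ)`. -/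
noncomputable def Lam (x : ℝ) (ρ : Matrix (Fin 3) (Fin 3) ℂ) : Matrix (Fin 3) (Fin 3) ℂ :=
  ((1 : ℂ) - (x : ℂ)) • ρ + ((x : ℂ) / 2) • (ρ.trace • (1 : Matrix (Fin 3) (Fin 3) ℂ) - ρᵀ)

/-- Superadditivity of `negMulLog` for two nonneg reals. -/
lemma negMulLog_add_le {a b : ℝ} (ha : 0 ≤ a) (hb : 0 ≤ b) :
    Real.negMulLog (a + b) ≤ Real.negMulLog a + Real.negMulLog b := by
  rcases eq_or_lt_of_le ha with h | ha'
  · simp [← h]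
  rcases eq_or_lt_of_le hb with h | hb'
  · simp [← h]
  simp only [Real.negMulLog]
  have h1 : -(a + b) * Real.log (a + b) = -a * Real.log (a+b) + -b * Real.log (a+b) := by ring
  rw [h1]
  gcongr ?_ + ?_
  · have : Real.log a ≤ Real.log (a + b) := Real.log_le_log ha' (by linarith)
    nlinarith
  · have : Real.log b ≤ Real.log (a + b) := Real.log_le_log hb' (by linarith)
    nlinarith

lemma negMulLog_sum_le {ι : Type*} (s : Finset ι) (f : ι → ℝ) (hf : ∀ i ∈ s, 0 ≤ f i) :
    Real.negMulLog (∑ i ∈ s, f i) ≤ ∑ i ∈ s, Real.negMulLog (f i) := by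
  classical
  induction s using Finset.induction_on with
  | empty => simp
  | @insert a s hnot ih =>
    rw [Finset.sum_insert hnot, Finset.sum_insert hnot]
    have hfa := hf a (Finset.mem_insert_self a s)
    have hfs : ∀ i ∈ s, 0 ≤ f i := fun i hi => hf i (Finset.mem_insert_of_mem hi)
    calc Real.negMulLog (f a + ∑ i ∈ s, f i)
        ≤ Real.negMulLog (f a) + Real.negMulLog (∑ i ∈ s, f i) :=
          negMulLog_add_le hfa (Finset.sum_nonneg hfs)
      _ ≤ Real.negMulLog (f a) + ∑ i ∈ s, Real.negMulLog (f i) := by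
          exact add_le_add (le_refl _) (ih hfs)

lemma vecMulVec_mulVec {n : Type*} [Fintype n] (a b w : n → ℂ) :
    (vecMulVec a b) *ᵥ w = (b ⬝ᵥ w) • a := by
  ext i
  simp [mulVec, vecMulVec_apply, dotProduct, Finset.mul_sum, mul_assoc, mul_comm, mul_left_comm]

lemma posSemidef_outer {n : Type*} [Fintype n] (u : n → ℂ) :
    (vecMulVec u (star u)).PosSemidef := by
  rw [Matrix.posSemidef_iff_dotProduct_mulVec]
  constructor
  · ext i j
    simp [conjTranspose_apply, vecMulVec_apply, mul_comm]
  · intro v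
    rw [_root_.vecMulVec_mulVec, dotProduct_smul]
    have h : star u ⬝ᵥ v = star (star v ⬝ᵥ u) := by
      rw [star_dotProduct]
    rw [h, smul_eq_mul]
    exact star_mul_self_nonneg _

lemma posSemidef_smul_real {n : Type*} [Fintype n] {M : Matrix n n ℂ}
    (hM : M.PosSemidef) {c : ℝ} (hc : 0 ≤ c) : ((c : ℂ) • M).PosSemidef := by
  rw [Matrix.posSemidef_iff_dotProduct_mulVec]
  constructor
  · unfold Matrix.IsHermitian
    rw [conjTranspose_smul, hM.1]
    congr 1
    simp
  · intro v
    rw [smul_mulVec, dotProduct_smul, smul_eq_mul]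
    exact mul_nonneg (by exact_mod_cast Complex.zero_le_real.mpr hc) (hM.dotProduct_mulVec_nonneg v)

theorem lam_min_output_entropy (x : ℝ) (hx0 : 0 ≤ x) (hx1 : x ≤ 1)
    (ψ : EuclideanSpace ℂ (Fin 3)) (hψ : ‖ψ‖ = 1) :
    ∃ h : (Lam x (Matrix.vecMulVec (ψ : Fin 3 → ℂ) (star (ψ : Fin 3 → ℂ)))).PosSemidef,
      -(x / 2) * Real.log (x / 2) - (1 - x / 2) * Real.log (1 - x / 2) ≤
        ∑ i, Real.negMulLog (h.1.eigenvalues i) := by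
  classical
  set u : Fin 3 → ℂ := (ψ : Fin 3 → ℂ) with hu_def
  -- basic norm facts
  have hsum : star u ⬝ᵥ u = 1 := by
    have h1 : (inner ℂ ψ ψ : ℂ) = ((‖ψ‖ : ℂ))^2 := inner_self_eq_norm_sq_to_K ψ
    rw [hψ] at h1
    simpa [PiLp.inner_apply, dotProduct, RCLike.inner_apply, hu_def, mul_comm, -inner_self_eq_norm_sq_to_K] using h1
  have hsum' : u ⬝ᵥ star u = 1 := by rw [dotProduct_comm]; exact hsum
  set ρ : Matrix (Fin 3) (Fin 3) ℂ := vecMulVec u (star u) with hρ_def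
  have hρtr : ρ.trace = 1 := by
    simpa [hρ_def, Matrix.trace, Matrix.diag, vecMulVec_apply, dotProduct] using hsum'
  have hρT : ρᵀ = vecMulVec (star u) (star (star u)) := by
    ext i j
    simp [hρ_def, transpose_apply, vecMulVec_apply, mul_comm]
  -- rewrite Lam
  have hA_eq : Lam x ρ = ((1 - x : ℝ) : ℂ) • ρ +
      ((x / 2 : ℝ) : ℂ) • ((1 : Matrix (Fin 3) (Fin 3) ℂ) - ρᵀ) := by
    unfold Lam
    rw [hρtr, one_smul]
    push_cast
    ring_nf
  -- positivity of 1 - ρᵀ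
  have hPT : (vecMulVec (star u) (star (star u))).PosSemidef := posSemidef_outer (star u)
  have hPmul : ρᵀ * ρᵀ = ρᵀ := by
    rw [hρT]
    ext i j
    simp only [Matrix.mul_apply, vecMulVec_apply, star_star]
    have hsc : ∑ k, ((star u) i * u k) * ((star u) k * u j)
        = (star u) i * u j * (star u ⬝ᵥ u) := by
      simp only [dotProduct, Finset.mul_sum]
      exact Finset.sum_congr rfl fun k _ => by ring
    rw [hsc, hsum, mul_one]
  have hherm1 : ((1 : Matrix (Fin 3) (Fin 3) ℂ) - ρᵀ).IsHermitian := by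
    have := (hρT ▸ hPT.1 : ρᵀ.IsHermitian)
    exact Matrix.isHermitian_one.sub this
  have hPSD1 : ((1 : Matrix (Fin 3) (Fin 3) ℂ) - ρᵀ).PosSemidef := by
    have hsq : ((1 : Matrix (Fin 3) (Fin 3) ℂ) - ρᵀ)ᴴ * ((1 : Matrix (Fin 3) (Fin 3) ℂ) - ρᵀ)
        = (1 : Matrix (Fin 3) (Fin 3) ℂ) - ρᵀ := by
      rw [hherm1]
      rw [Matrix.sub_mul, Matrix.mul_sub, Matrix.mul_sub, hPmul]
      simp
    have := Matrix.posSemidef_conjTranspose_mul_self ((1 : Matrix (Fin 3) (Fin 3) ℂ) - ρᵀ)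
    rwa [hsq] at this
  have hPSD : (Lam x ρ).PosSemidef := by
    rw [hA_eq]
    exact (posSemidef_smul_real (posSemidef_outer u) (by linarith)).add
      (posSemidef_smul_real hPSD1 (by linarith))
  refine ⟨hPSD, ?_⟩
  set e : Fin 3 → ℝ := hPSD.1.eigenvalues with he_def
  have he_nonneg : ∀ i, 0 ≤ e i := fun i => hPSD.eigenvalues_nonneg i
  -- trace = 1
  have htrA : (Lam x ρ).trace = 1 := by
    unfold Lam
    rw [trace_add, trace_smul, trace_smul, trace_sub, trace_smul, trace_transpose, hρtr]
    simp [Matrix.trace_one]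
    ring
  -- sum of eigenvalues = 1
  set U : Matrix (Fin 3) (Fin 3) ℂ := (hPSD.1.eigenvectorUnitary : Matrix (Fin 3) (Fin 3) ℂ)
    with hU_def
  have hUU : U * star U = 1 := (Matrix.mem_unitaryGroup_iff).mp hPSD.1.eigenvectorUnitary.2
  have hUU' : star U * U = 1 := (Matrix.mem_unitaryGroup_iff').mp hPSD.1.eigenvectorUnitary.2
  have hspec := hPSD.1.spectral_theorem
  have hsum_eC : ∑ i, (e i : ℂ) = 1 := by
    have h1 : (Lam x ρ).trace = (diagonal (RCLike.ofReal ∘ e)).trace := by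
      conv_lhs => rw [hspec, Unitary.conjStarAlgAut_apply]
      rw [Matrix.trace_mul_comm, ← Matrix.mul_assoc, hUU', Matrix.one_mul]
    rw [htrA] at h1
    have h2 : (diagonal (RCLike.ofReal ∘ e)).trace = ∑ i, (e i : ℂ) := by
      simp [Matrix.trace_diagonal]
    rw [h2] at h1
    exact h1.symm
  have hsum_e : ∑ i, e i = 1 := by
    have : ((∑ i, e i : ℝ) : ℂ) = 1 := by push_cast; rw [hsum_eC]
    exact_mod_cast this
  -- existence of eigenvector with eigenvalue x/2
  have hw : ∃ w : Fin 3 → ℂ, w ≠ 0 ∧ star u ⬝ᵥ w = 0 ∧ u ⬝ᵥ w = 0 := by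
    set M : Matrix (Fin 2) (Fin 3) ℂ := Matrix.of ![star u, u] with hM_def
    have hninj : ¬ Function.Injective M.mulVecLin := by
      intro h
      have := LinearMap.finrank_le_finrank_of_injective h
      simp [Module.finrank_pi] at this
    obtain ⟨a, b, hab, hne⟩ := Function.not_injective_iff.mp hninj
    refine ⟨a - b, sub_ne_zero_of_ne hne, ?_, ?_⟩
    · have : M *ᵥ (a - b) = 0 := by
        rw [Matrix.mulVec_sub]
        rw [show M *ᵥ a = M.mulVecLin a from rfl, show M *ᵥ b = M.mulVecLin b from rfl, hab]
        simp
      have h0 := congrFun this 0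
      simpa [hM_def, Matrix.mulVec, Matrix.of_apply, dotProduct] using h0
    · have : M *ᵥ (a - b) = 0 := by
        rw [Matrix.mulVec_sub]
        rw [show M *ᵥ a = M.mulVecLin a from rfl, show M *ᵥ b = M.mulVecLin b from rfl, hab]
        simp
      have h1 := congrFun this 1
      simpa [hM_def, Matrix.mulVec, Matrix.of_apply, dotProduct] using h1
  obtain ⟨w, hw0, hw1, hw2⟩ := hw
  have hAw : (Lam x ρ) *ᵥ w = ((x / 2 : ℝ) : ℂ) • w := by
    rw [hA_eq, Matrix.add_mulVec, Matrix.smul_mulVec, Matrix.smul_mulVec,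
      Matrix.sub_mulVec, Matrix.one_mulVec, hρ_def, _root_.vecMulVec_mulVec, hw1,
      hρT, _root_.vecMulVec_mulVec, star_star, hw2]
    simp
  -- x/2 is an eigenvalue
  have hex : ∃ i, e i = x / 2 := by
    set w' : Fin 3 → ℂ := star U *ᵥ w with hw'_def
    have hw'0 : w' ≠ 0 := by
      intro h
      apply hw0
      have : (U * star U) *ᵥ w = U *ᵥ w' := by rw [← Matrix.mulVec_mulVec]
      rw [hUU, Matrix.one_mulVec, h, Matrix.mulVec_zero] at this
      exact this
    have hDw : (diagonal (RCLike.ofReal ∘ e)) *ᵥ w' = ((x / 2 : ℝ) : ℂ) • w' := by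
      have hDU : diagonal (RCLike.ofReal ∘ e) * star U = star U * (Lam x ρ) := by
        conv_rhs => rw [hspec, Unitary.conjStarAlgAut_apply]
        rw [← Matrix.mul_assoc, ← Matrix.mul_assoc, hUU', Matrix.one_mul]
      calc (diagonal (RCLike.ofReal ∘ e)) *ᵥ w'
          = (diagonal (RCLike.ofReal ∘ e) * star U) *ᵥ w := by
            rw [← Matrix.mulVec_mulVec]
        _ = (star U * (Lam x ρ)) *ᵥ w := by rw [hDU]
        _ = star U *ᵥ ((Lam x ρ) *ᵥ w) := by rw [← Matrix.mulVec_mulVec]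
        _ = ((x / 2 : ℝ) : ℂ) • w' := by rw [hAw, Matrix.mulVec_smul]
    obtain ⟨i, hi⟩ := Function.ne_iff.mp hw'0
    have := congrFun hDw i
    simp only [Matrix.mulVec_diagonal, Function.comp_apply, Pi.smul_apply, smul_eq_mul] at this
    have heq : (e i : ℂ) = ((x / 2 : ℝ) : ℂ) := mul_right_cancel₀ hi this
    exact ⟨i, by exact_mod_cast heq⟩
  obtain ⟨i₀, hi₀⟩ := hex
  -- final inequality
  have hsplit : ∑ i, Real.negMulLog (e i)
      = Real.negMulLog (e i₀) + ∑ i ∈ Finset.univ.erase i₀, Real.negMulLog (e i) := by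
    rw [← Finset.add_sum_erase _ _ (Finset.mem_univ i₀)]
  have herase_sum : ∑ i ∈ Finset.univ.erase i₀, e i = 1 - x / 2 := by
    have := Finset.add_sum_erase Finset.univ e (Finset.mem_univ i₀)
    rw [hsum_e] at this
    rw [hi₀] at this
    linarith
  have hrest : Real.negMulLog (1 - x / 2) ≤ ∑ i ∈ Finset.univ.erase i₀, Real.negMulLog (e i) := by
    rw [← herase_sum]
    exact negMulLog_sum_le _ _ (fun i _ => he_nonneg i)
  rw [hsplit, hi₀]
  have hgoal : -(x / 2) * Real.log (x / 2) - (1 - x / 2) * Real.log (1 - x / 2)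
      = Real.negMulLog (x / 2) + Real.negMulLog (1 - x / 2) := by
    simp [Real.negMulLog]; ring
  rw [hgoal]
  exact add_le_add (le_refl _) hrest
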